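/- arXiv:2304.00550 — 3 statements merged into one kernel-verified Lean document; each statement's English description precedes it below -/
import Mathlib

section
/- In the space ℝ³ equipped with the supremum norm ‖(x,y,z)‖ = max(|x|,|y|,|z|) (whose unit ball is a cube), for any three points x_1, x_2, x_3, if the Fermat–Torricelli set ft(x_1, x_2, x_3) is not a single point, then there exist a ≠ b such that ft(x_1, x_2, x_3) equals the closed segment with endpoints a and b. -/
/-- The Fermat–Torricelli set of the points `x 0, …, x (n-1)`: the set of points minimizing
the sum of distances to the `x i`. -/
def ft {X : Type*} [NormedAddCommGroup X] {n : ℕ} (x : Fin n → X) : Set X :=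
  {p | ∀ q : X, ∑ i, ‖p - x i‖ ≤ ∑ i, ‖q - x i‖}

noncomputable section

lemma abs_le_norm3 (w : Fin 3 → ℝ) (k : Fin 3) : |w k| ≤ ‖w‖ := by
  simpa [Real.norm_eq_abs] using norm_le_pi_norm w k

lemma sgn_le_norm3 (w : Fin 3 → ℝ) (k : Fin 3) (ε : ℝ) (hε : ε = 1 ∨ ε = -1) :
    ε * w k ≤ ‖w‖ := by
  rcases hε with rfl | rfl
  · simpa using (le_abs_self (w k)).trans (abs_le_norm3 w k)
  · simpa using (neg_le_abs (w k)).trans ((abs_le_norm3 w k))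

lemma norm3_le_of {w : Fin 3 → ℝ} {c : ℝ} (h0 : |w 0| ≤ c) (h1 : |w 1| ≤ c) (h2 : |w 2| ≤ c) :
    ‖w‖ ≤ c := by
  have hc : 0 ≤ c := le_trans (abs_nonneg _) h0
  rw [pi_norm_le_iff_of_nonneg hc]
  intro i
  fin_cases i <;> simpa [Real.norm_eq_abs]

lemma exists_active (w : Fin 3 → ℝ) : ∃ j ε, (ε = (1:ℝ) ∨ ε = -1) ∧ ε * w j = ‖w‖ := by
  have h : ∃ j : Fin 3, |w j| = ‖w‖ := by
    have hle : ‖w‖ ≤ max (|w 0|) (max (|w 1|) (|w 2|)) := by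
      apply norm3_le_of <;> simp [le_max_iff, le_refl]
    rcases max_choice (|w 0|) (max (|w 1|) (|w 2|)) with h1 | h1
    · exact ⟨0, le_antisymm (abs_le_norm3 w 0) (by rw [h1] at hle; exact hle)⟩
    · rw [h1] at hle
      rcases max_choice (|w 1|) (|w 2|) with h2 | h2 <;> rw [h2] at hle
      · exact ⟨1, le_antisymm (abs_le_norm3 w 1) hle⟩
      · exact ⟨2, le_antisymm (abs_le_norm3 w 2) hle⟩
  obtain ⟨j, hj⟩ := h
  rcases abs_cases (w j) with ⟨ha, _⟩ | ⟨ha, _⟩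
  · exact ⟨j, 1, Or.inl rfl, by rw [one_mul, ← ha, hj]⟩
  · exact ⟨j, -1, Or.inr rfl, by rw [neg_one_mul, ← ha, hj]⟩

lemma norm_combo {E : Type*} [SeminormedAddCommGroup E] [NormedSpace ℝ E] {s t : ℝ}
    (hs : 0 ≤ s) (ht : 0 ≤ t) (a b : E) : ‖s • a + t • b‖ ≤ s * ‖a‖ + t * ‖b‖ := by
  calc ‖s • a + t • b‖ ≤ ‖s • a‖ + ‖t • b‖ := norm_add_le _ _
    _ = s * ‖a‖ + t * ‖b‖ := by rw [norm_smul, norm_smul, Real.norm_eq_abs, Real.norm_eq_abs,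
        abs_of_nonneg hs, abs_of_nonneg ht]

lemma norm_bary {E : Type*} [SeminormedAddCommGroup E] [NormedSpace ℝ E] (a b c : E) :
    ‖(1/3 : ℝ) • (a + b + c)‖ ≤ (‖a‖ + ‖b‖ + ‖c‖)/3 := by
  have h1 : ‖a + b + c‖ ≤ ‖a‖ + ‖b‖ + ‖c‖ := norm_add₃_le
  have h2 : ‖(1/3 : ℝ) • (a + b + c)‖ = (1/3) * ‖a + b + c‖ := by
    rw [norm_smul, Real.norm_eq_abs]; norm_num
  rw [h2]; linarith

lemma pert_bound (w d : Fin 3 → ℝ) (j₀ : Fin 3) (ε₀ : ℝ)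
    (hact : ε₀ * w j₀ = ‖w‖)
    (huniq : ∀ k (ε : ℝ), (ε = 1 ∨ ε = -1) → ε * w k = ‖w‖ → k = j₀ ∧ ε = ε₀) :
    ∃ t₀ > 0, ∀ t, 0 < t → t ≤ t₀ → ‖w + t • d‖ ≤ ‖w‖ + t * (ε₀ * d j₀) := by
  set h : Fin 3 → ℝ → ℝ := fun k ε =>
    if k = j₀ ∧ ε = ε₀ then 1 else (‖w‖ - ε * w k)/(1 + |ε * d k - ε₀ * d j₀|) with hh
  have hpos : ∀ k (ε : ℝ), (ε = 1 ∨ ε = -1) → 0 < h k ε := by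
    intro k ε hε
    by_cases hke : k = j₀ ∧ ε = ε₀
    · simp [hh, hke]
    · have hlt : ε * w k < ‖w‖ :=
        lt_of_le_of_ne (sgn_le_norm3 w k ε hε) (fun he => hke (huniq k ε hε he))
      have hden : 0 < 1 + |ε * d k - ε₀ * d j₀| := by positivity
      simp only [hh, if_neg hke]
      exact div_pos (by linarith) hden
  have hkey : ∀ k (ε : ℝ), (ε = 1 ∨ ε = -1) → ∀ t : ℝ, 0 < t → t ≤ h k ε →
      ε * (w k + t * d k) ≤ ‖w‖ + t * (ε₀ * d j₀) := by
    intro k ε hε t ht hth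
    by_cases hke : k = j₀ ∧ ε = ε₀
    · obtain ⟨rfl, rfl⟩ := hke
      rw [mul_add]
      rw [hact]
      nlinarith [le_refl t]
    · have hlt : ε * w k < ‖w‖ :=
        lt_of_le_of_ne (sgn_le_norm3 w k ε hε) (fun he => hke (huniq k ε hε he))
      have hden : 0 < 1 + |ε * d k - ε₀ * d j₀| := by positivity
      rw [hh] at hth; simp only [if_neg hke] at hth
      have h1 : t * (1 + |ε * d k - ε₀ * d j₀|) ≤ ‖w‖ - ε * w k :=
        (le_div_iff₀ hden).mp hth
      have h2 : t * (ε * d k - ε₀ * d j₀) ≤ t * (1 + |ε * d k - ε₀ * d j₀|) := by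
        apply mul_le_mul_of_nonneg_left _ ht.le
        have := le_abs_self (ε * d k - ε₀ * d j₀)
        linarith
      nlinarith
  refine ⟨min (min (h 0 1) (h 0 (-1))) (min (min (h 1 1) (h 1 (-1))) (min (h 2 1) (h 2 (-1)))), ?_, ?_⟩
  · simp only [lt_min_iff]
    refine ⟨⟨?_, ?_⟩, ⟨?_, ?_⟩, ?_, ?_⟩ <;>
      first
        | exact hpos _ 1 (Or.inl rfl)
        | exact hpos _ (-1) (Or.inr rfl)
  · intro t ht htle
    simp only [le_min_iff] at htle
    obtain ⟨⟨h01, h0n⟩, ⟨h11, h1n⟩, h21, h2n⟩ := htle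
    apply norm3_le_of <;> rw [abs_le] <;> constructor
    · have := hkey 0 (-1) (Or.inr rfl) t ht h0n; simp only [Pi.add_apply, Pi.smul_apply, smul_eq_mul] at *; nlinarith
    · have := hkey 0 1 (Or.inl rfl) t ht h01; simp only [Pi.add_apply, Pi.smul_apply, smul_eq_mul] at *; nlinarith
    · have := hkey 1 (-1) (Or.inr rfl) t ht h1n; simp only [Pi.add_apply, Pi.smul_apply, smul_eq_mul] at *; nlinarith
    · have := hkey 1 1 (Or.inl rfl) t ht h11; simp only [Pi.add_apply, Pi.smul_apply, smul_eq_mul] at *; nlinarith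
    · have := hkey 2 (-1) (Or.inr rfl) t ht h2n; simp only [Pi.add_apply, Pi.smul_apply, smul_eq_mul] at *; nlinarith
    · have := hkey 2 1 (Or.inl rfl) t ht h21; simp only [Pi.add_apply, Pi.smul_apply, smul_eq_mul] at *; nlinarith

def dot3 (a b : Fin 3 → ℝ) : ℝ := a 0 * b 0 + a 1 * b 1 + a 2 * b 2

def cross3 (a b : Fin 3 → ℝ) : Fin 3 → ℝ :=
  ![a 1 * b 2 - a 2 * b 1, a 2 * b 0 - a 0 * b 2, a 0 * b 1 - a 1 * b 0]

lemma cross3_triple (w a b : Fin 3 → ℝ) :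
    cross3 w (cross3 a b) = dot3 w b • a - dot3 w a • b := by
  funext i
  fin_cases i <;>
    simp [cross3, dot3, Matrix.cons_val_zero, Matrix.cons_val_one] <;> ring

lemma cross3_anticomm (a b : Fin 3 → ℝ) : cross3 a b = -cross3 b a := by
  funext i; fin_cases i <;> simp [cross3] <;> ring

lemma collinear_of_cross3_zero {a b : Fin 3 → ℝ} (h : cross3 a b = 0) (ha : a ≠ 0) :
    ∃ c : ℝ, b = c • a := by
  have e0 : a 1 * b 2 - a 2 * b 1 = 0 := by simpa [cross3] using congrFun h 0
  have e1 : a 2 * b 0 - a 0 * b 2 = 0 := by simpa [cross3] using congrFun h 1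
  have e2 : a 0 * b 1 - a 1 * b 0 = 0 := by simpa [cross3] using congrFun h 2
  have hex : ∃ i, a i ≠ 0 := by
    by_contra hc; push_neg at hc; exact ha (funext fun i => hc i)
  obtain ⟨i, hi⟩ := hex
  refine ⟨b i / a i, funext fun k => ?_⟩
  have key : b k * a i = b i * a k := by
    fin_cases i <;> fin_cases k <;> simp at hi ⊢ <;> linarith [e0, e1, e2]
  have : (b i / a i) * a k = b k := by
    rw [div_mul_eq_mul_div, div_eq_iff hi]; linarith [key]
  simpa [Pi.smul_apply, smul_eq_mul] using this.symm


lemma psi_parallel_delta {u v ψ δ : Fin 3 → ℝ}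
    (hind : ∀ s t : ℝ, s • u + t • v = 0 → s = 0 ∧ t = 0)
    (hψu : dot3 ψ u = 0) (hψv : dot3 ψ v = 0)
    (hδu : dot3 δ u = 0) (hδv : dot3 δ v = 0) (hδ : δ ≠ 0) :
    ∃ c : ℝ, ψ = c • δ := by
  set n := cross3 u v with hn
  have hu0 : u ≠ 0 := by
    intro h0
    have := hind 1 0 (by simp [h0])
    simpa using this.1
  have hn0 : n ≠ 0 := by
    intro h0
    obtain ⟨c, hc⟩ := collinear_of_cross3_zero h0 hu0
    have := hind c (-1) (by rw [hc, neg_one_smul]; exact add_neg_cancel _)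
    simpa using this.2
  have hperp : ∀ z : Fin 3 → ℝ, dot3 z u = 0 → dot3 z v = 0 → ∃ c : ℝ, z = c • n := by
    intro z hzu hzv
    have h1 : cross3 z n = 0 := by
      rw [hn, cross3_triple, hzv, hzu]; simp
    have h2 : cross3 n z = 0 := by
      rw [cross3_anticomm, h1]; simp
    exact collinear_of_cross3_zero h2 hn0
  obtain ⟨c₁, hc₁⟩ := hperp δ hδu hδv
  obtain ⟨c₂, hc₂⟩ := hperp ψ hψu hψv
  have hc₁0 : c₁ ≠ 0 := by rintro rfl; exact hδ (by simp [hc₁])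
  refine ⟨c₂ / c₁, ?_⟩
  rw [hc₁, hc₂, smul_smul, div_mul_cancel₀ _ hc₁0]

lemma dot3_psi (j0 j1 j2 : Fin 3) (ε0 ε1 ε2 : ℝ) (w : Fin 3 → ℝ) :
    dot3 (fun k => (if j0 = k then ε0 else 0) + (if j1 = k then ε1 else 0)
      + (if j2 = k then ε2 else 0)) w = ε0 * w j0 + ε1 * w j1 + ε2 * w j2 := by
  fin_cases j0 <;> fin_cases j1 <;> fin_cases j2 <;> simp [dot3] <;> ring

lemma dot3_delta (j j' : Fin 3) (ε ε' : ℝ) (w : Fin 3 → ℝ) :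
    dot3 (fun k => (if j = k then ε else 0) - (if j' = k then ε' else 0)) w
      = ε * w j - ε' * w j' := by
  fin_cases j <;> fin_cases j' <;> simp [dot3] <;> ring

set_option maxHeartbeats 1000000 in
lemma parity_contra {ε0 ε1 ε2 ε ε' c t0 t1 t2 : ℝ}
    (hε0 : ε0 = 1 ∨ ε0 = -1) (hε1 : ε1 = 1 ∨ ε1 = -1) (hε2 : ε2 = 1 ∨ ε2 = -1)
    (hεa : ε = 1 ∨ ε = -1) (hεb : ε' = 1 ∨ ε' = -1)
    (ht0 : t0 = 0 ∨ t0 = 1) (ht1 : t1 = 0 ∨ t1 = 1) (ht2 : t2 = 0 ∨ t2 = 1)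
    (hsum : ε0 + ε1 + ε2 = c * (ε - ε'))
    (hpj : ε0 * t0 + ε1 * t1 + ε2 * t2 = c * ε) : False := by
  rcases hεa with rfl | rfl <;> rcases hεb with rfl | rfl <;>
    rcases hε0 with rfl | rfl <;> rcases hε1 with rfl | rfl <;> rcases hε2 with rfl | rfl <;>
    rcases ht0 with rfl | rfl <;> rcases ht1 with rfl | rfl <;> rcases ht2 with rfl | rfl <;>
    linarith only [hsum, hpj]

set_option maxHeartbeats 4000000 in
lemma key_dep (x : Fin 3 → (Fin 3 → ℝ)) {p q r : Fin 3 → ℝ}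
    (hp : ∀ y, ∑ i, ‖p - x i‖ ≤ ∑ i, ‖y - x i‖)
    (hq : ∀ y, ∑ i, ‖q - x i‖ ≤ ∑ i, ‖y - x i‖)
    (hr : ∀ y, ∑ i, ‖r - x i‖ ≤ ∑ i, ‖y - x i‖) :
    ∃ s t : ℝ, ¬(s = 0 ∧ t = 0) ∧ s • (q - p) + t • (r - p) = 0 := by
  by_contra hcon
  push_neg at hcon
  have hind : ∀ s t : ℝ, s • (q - p) + t • (r - p) = 0 → s = 0 ∧ t = 0 := by
    intro s t hst
    by_contra hne
    exact hcon s t (fun hs ht => hne ⟨hs, ht⟩) hst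
  clear hcon
  simp only [Fin.sum_univ_three] at hp hq hr
  set m := (1/3 : ℝ) • (p + q + r) with hmdef
  have hmi : ∀ i : Fin 3, m - x i = (1/3 : ℝ) • ((p - x i) + (q - x i) + (r - x i)) := by
    intro i; funext k
    simp [hmdef, Pi.smul_apply, Pi.sub_apply, Pi.add_apply]; ring
  have hm_le : ∀ i : Fin 3, ‖m - x i‖ ≤ (‖p - x i‖ + ‖q - x i‖ + ‖r - x i‖)/3 := by
    intro i; rw [hmi i]; exact norm_bary _ _ _
  have hfqp : ‖q - x 0‖ + ‖q - x 1‖ + ‖q - x 2‖ = ‖p - x 0‖ + ‖p - x 1‖ + ‖p - x 2‖ :=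
    le_antisymm (hq p) (hp q)
  have hfrp : ‖r - x 0‖ + ‖r - x 1‖ + ‖r - x 2‖ = ‖p - x 0‖ + ‖p - x 1‖ + ‖p - x 2‖ :=
    le_antisymm (hr p) (hp r)
  have hpm := hp m
  have havg : ∀ i : Fin 3, ‖m - x i‖ = (‖p - x i‖ + ‖q - x i‖ + ‖r - x i‖)/3 := by
    have h0 := hm_le 0; have h1 := hm_le 1; have h2 := hm_le 2
    have e0 : ‖m - x 0‖ = (‖p - x 0‖ + ‖q - x 0‖ + ‖r - x 0‖)/3 := by linarith
    have e1 : ‖m - x 1‖ = (‖p - x 1‖ + ‖q - x 1‖ + ‖r - x 1‖)/3 := by linarith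
    have e2 : ‖m - x 2‖ = (‖p - x 2‖ + ‖q - x 2‖ + ‖r - x 2‖)/3 := by linarith
    intro i
    fin_cases i
    · exact e0
    · exact e1
    · exact e2
  have hE : ∀ (i : Fin 3) (j : Fin 3) (ε : ℝ), (ε = 1 ∨ ε = -1) → ε * (m - x i) j = ‖m - x i‖ →
      ‖p - x i‖ = ε * (p - x i) j ∧ ‖q - x i‖ = ε * (q - x i) j ∧ ‖r - x i‖ = ε * (r - x i) j := by
    intro i j ε hε hact
    have hsp := sgn_le_norm3 (p - x i) j ε hε
    have hsq := sgn_le_norm3 (q - x i) j ε hε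
    have hsr := sgn_le_norm3 (r - x i) j ε hε
    have hmj : (m - x i) j = ((p - x i) j + (q - x i) j + (r - x i) j)/3 := by
      have h5 := congrFun (hmi i) j
      simp only [Pi.smul_apply, Pi.add_apply, Pi.sub_apply, smul_eq_mul] at h5
      simp only [Pi.sub_apply]
      rw [h5]; ring
    have h4 : ε * (((p - x i) j + (q - x i) j + (r - x i) j)/3)
        = (‖p - x i‖ + ‖q - x i‖ + ‖r - x i‖)/3 := by rw [← hmj, hact, havg i]
    have hsum : ε * (p - x i) j + ε * (q - x i) j + ε * (r - x i) j
        = ‖p - x i‖ + ‖q - x i‖ + ‖r - x i‖ := by linear_combination 3 * h4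
    exact ⟨by linarith, by linarith, by linarith⟩
  obtain ⟨j0, ε0, hε0, hact0⟩ := exists_active (m - x 0)
  obtain ⟨j1, ε1, hε1, hact1⟩ := exists_active (m - x 1)
  obtain ⟨j2, ε2, hε2, hact2⟩ := exists_active (m - x 2)
  obtain ⟨hEp0, hEq0, hEr0⟩ := hE 0 j0 ε0 hε0 hact0
  obtain ⟨hEp1, hEq1, hEr1⟩ := hE 1 j1 ε1 hε1 hact1
  obtain ⟨hEp2, hEq2, hEr2⟩ := hE 2 j2 ε2 hε2 hact2
  have Hu : ε0 * ((q - p) j0) + ε1 * ((q - p) j1) + ε2 * ((q - p) j2) = 0 := by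
    simp only [Pi.sub_apply] at hEp0 hEq0 hEp1 hEq1 hEp2 hEq2 ⊢
    linear_combination hfqp - ((hEq0 - hEp0) + (hEq1 - hEp1) + (hEq2 - hEp2))
  have Hv : ε0 * ((r - p) j0) + ε1 * ((r - p) j1) + ε2 * ((r - p) j2) = 0 := by
    simp only [Pi.sub_apply] at hEp0 hEr0 hEp1 hEr1 hEp2 hEr2 ⊢
    linear_combination hfrp - ((hEr0 - hEp0) + (hEr1 - hEp1) + (hEr2 - hEp2))
  by_cases hB : ∃ (i j : Fin 3) (ε : ℝ) (j' : Fin 3) (ε' : ℝ),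
      ((ε = 1 ∨ ε = -1) ∧ ε * (m - x i) j = ‖m - x i‖) ∧
      ((ε' = 1 ∨ ε' = -1) ∧ ε' * (m - x i) j' = ‖m - x i‖) ∧ ¬(j = j' ∧ ε = ε')
  · obtain ⟨i, j, ε, j', ε', ⟨hεa, hacta⟩, ⟨hεb, hactb⟩, hne⟩ := hB
    obtain ⟨hPa, hQa, hRa⟩ := hE i j ε hεa hacta
    obtain ⟨hPb, hQb, hRb⟩ := hE i j' ε' hεb hactb
    by_cases hjj : j = j'
    · subst hjj
      have hεε : ε ≠ ε' := fun he => hne ⟨rfl, he⟩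
      have hp0 : ‖p - x i‖ = 0 := by
        rcases hεa with rfl | rfl <;> rcases hεb with rfl | rfl <;>
          first | exact absurd rfl hεε | linarith [hPa, hPb]
      have hq0 : ‖q - x i‖ = 0 := by
        rcases hεa with rfl | rfl <;> rcases hεb with rfl | rfl <;>
          first | exact absurd rfl hεε | linarith [hQa, hQb]
      have hpq : q - p = 0 := by
        have h1 : p = x i := sub_eq_zero.mp (norm_eq_zero.mp hp0)
        have h2 : q = x i := sub_eq_zero.mp (norm_eq_zero.mp hq0)
        rw [h1, h2, sub_self]
      have := (hind 1 0 (by rw [hpq]; simp)).1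
      norm_num at this
    · have hδu : ε * ((q - p) j) - ε' * ((q - p) j') = 0 := by
        simp only [Pi.sub_apply] at hPa hQa hPb hQb ⊢
        first
          | linear_combination (hQa - hPa) - (hQb - hPb)
          | linear_combination (hQb - hPb) - (hQa - hPa)
      have hδv : ε * ((r - p) j) - ε' * ((r - p) j') = 0 := by
        simp only [Pi.sub_apply] at hPa hRa hPb hRb ⊢
        first
          | linear_combination (hRa - hPa) - (hRb - hPb)
          | linear_combination (hRb - hPb) - (hRa - hPa)
      have hψu : dot3 (fun k => (if j0 = k then ε0 else 0) + (if j1 = k then ε1 else 0)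
          + (if j2 = k then ε2 else 0)) (q - p) = 0 := by rw [dot3_psi]; exact Hu
      have hψv : dot3 (fun k => (if j0 = k then ε0 else 0) + (if j1 = k then ε1 else 0)
          + (if j2 = k then ε2 else 0)) (r - p) = 0 := by rw [dot3_psi]; exact Hv
      have hδu2 : dot3 (fun k => (if j = k then ε else 0) - (if j' = k then ε' else 0))
          (q - p) = 0 := by rw [dot3_delta]; exact hδu
      have hδv2 : dot3 (fun k => (if j = k then ε else 0) - (if j' = k then ε' else 0))
          (r - p) = 0 := by rw [dot3_delta]; exact hδv
      have hj'j : j' ≠ j := Ne.symm hjj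
      have hδne : (fun k => (if j = k then ε else 0) - (if j' = k then ε' else 0)) ≠ (0 : Fin 3 → ℝ) := by
        intro h0
        have h7 := congrFun h0 j
        simp [hj'j] at h7
        rcases hεa with rfl | rfl <;> norm_num at h7
      obtain ⟨c, hc⟩ := psi_parallel_delta hind hψu hψv hδu2 hδv2 hδne
      have dot3_smul : ∀ (cc : ℝ) (a b : Fin 3 → ℝ), dot3 (cc • a) b = cc * dot3 a b := by
        intro cc a b; simp [dot3, Pi.smul_apply]; ring
      have hsum : ε0 + ε1 + ε2 = c * (ε - ε') := by
        have h8 : dot3 (fun k => (if j0 = k then ε0 else 0) + (if j1 = k then ε1 else 0)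
            + (if j2 = k then ε2 else 0)) (fun _ => 1)
            = dot3 (c • fun k => (if j = k then ε else 0) - (if j' = k then ε' else 0)) (fun _ => 1) := by
          rw [← hc]
        rw [dot3_psi, dot3_smul, dot3_delta] at h8
        simpa using h8
      have hpj : ε0 * (if j0 = j then (1:ℝ) else 0) + ε1 * (if j1 = j then (1:ℝ) else 0)
          + ε2 * (if j2 = j then (1:ℝ) else 0) = c * ε := by
        have h8 : dot3 (fun k => (if j0 = k then ε0 else 0) + (if j1 = k then ε1 else 0)
            + (if j2 = k then ε2 else 0)) (fun k => if k = j then (1:ℝ) else 0)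
            = dot3 (c • fun k => (if j = k then ε else 0) - (if j' = k then ε' else 0))
              (fun k => if k = j then (1:ℝ) else 0) := by
          rw [← hc]
        rw [dot3_psi, dot3_smul, dot3_delta] at h8
        simpa [hj'j] using h8
      refine parity_contra hε0 hε1 hε2 hεa hεb ?_ ?_ ?_ hsum hpj <;>
        [by_cases H : j0 = j; by_cases H : j1 = j; by_cases H : j2 = j] <;>
        simp [H]
  · push_neg at hB
    have hP : ∀ d : Fin 3 → ℝ, 0 ≤ ε0 * d j0 + ε1 * d j1 + ε2 * d j2 := by
      intro d
      obtain ⟨T0, hT0, hb0⟩ := pert_bound (m - x 0) d j0 ε0 hact0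
        (fun k ε hεk hek => hB 0 k ε j0 ε0 ⟨hεk, hek⟩ ⟨hε0, hact0⟩)
      obtain ⟨T1, hT1, hb1⟩ := pert_bound (m - x 1) d j1 ε1 hact1
        (fun k ε hεk hek => hB 1 k ε j1 ε1 ⟨hεk, hek⟩ ⟨hε1, hact1⟩)
      obtain ⟨T2, hT2, hb2⟩ := pert_bound (m - x 2) d j2 ε2 hact2
        (fun k ε hεk hek => hB 2 k ε j2 ε2 ⟨hεk, hek⟩ ⟨hε2, hact2⟩)
      set t := min T0 (min T1 T2) with htdef
      have ht : 0 < t := lt_min hT0 (lt_min hT1 hT2)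
      have hle0 : t ≤ T0 := min_le_left _ _
      have hle1 : t ≤ T1 := le_trans (min_le_right _ _) (min_le_left _ _)
      have hle2 : t ≤ T2 := le_trans (min_le_right _ _) (min_le_right _ _)
      have hrw : ∀ i : Fin 3, m + t • d - x i = (m - x i) + t • d := by
        intro i; funext k; simp [Pi.add_apply, Pi.sub_apply]; ring
      have hmin := hp (m + t • d)
      have hb0' := hb0 t ht hle0
      have hb1' := hb1 t ht hle1
      have hb2' := hb2 t ht hle2
      rw [← hrw 0] at hb0'
      rw [← hrw 1] at hb1'
      rw [← hrw 2] at hb2'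
      have h10 : ‖m - x 0‖ + ‖m - x 1‖ + ‖m - x 2‖ = ‖p - x 0‖ + ‖p - x 1‖ + ‖p - x 2‖ := by
        rw [havg 0, havg 1, havg 2]; linarith [hfqp, hfrp]
      by_contra hneg
      push_neg at hneg
      have hmul : t * (ε0 * d j0 + ε1 * d j1 + ε2 * d j2) < 0 := mul_neg_of_pos_of_neg ht hneg
      have hexp : t * (ε0 * d j0) + t * (ε1 * d j1) + t * (ε2 * d j2) < 0 := by linarith [hmul]
      linarith [hmin, hb0', hb1', hb2', h10, hexp]
    set ψ : Fin 3 → ℝ := fun k => (if j0 = k then ε0 else 0) + (if j1 = k then ε1 else 0)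
      + (if j2 = k then ε2 else 0) with hψdef
    have hid : ε0 * ψ j0 + ε1 * ψ j1 + ε2 * ψ j2 = ψ 0 * ψ 0 + ψ 1 * ψ 1 + ψ 2 * ψ 2 := by
      have h12 := dot3_psi j0 j1 j2 ε0 ε1 ε2 ψ
      rw [← hψdef] at h12
      rw [← h12]
      simp [dot3]
    have hS : ψ 0 + ψ 1 + ψ 2 = ε0 + ε1 + ε2 := by
      have h12 := dot3_psi j0 j1 j2 ε0 ε1 ε2 (fun _ => 1)
      rw [← hψdef] at h12
      simp [dot3] at h12
      linarith [h12]
    have hPneg := hP (fun k => -(ψ k))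
    have h11 : ψ 0 * ψ 0 + ψ 1 * ψ 1 + ψ 2 * ψ 2 ≤ 0 := by linarith [hid, hPneg]
    have h00 : ψ 0 = 0 := by nlinarith [mul_self_nonneg (ψ 0), mul_self_nonneg (ψ 1), mul_self_nonneg (ψ 2)]
    have h01 : ψ 1 = 0 := by nlinarith [mul_self_nonneg (ψ 0), mul_self_nonneg (ψ 1), mul_self_nonneg (ψ 2)]
    have h02 : ψ 2 = 0 := by nlinarith [mul_self_nonneg (ψ 0), mul_self_nonneg (ψ 1), mul_self_nonneg (ψ 2)]
    rw [h00, h01, h02] at hS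
    rcases hε0 with rfl | rfl <;> rcases hε1 with rfl | rfl <;> rcases hε2 with rfl | rfl <;>
      norm_num at hS

lemma F_cont (x : Fin 3 → (Fin 3 → ℝ)) :
    Continuous (fun y : Fin 3 → ℝ => ∑ i, ‖y - x i‖) := by
  apply continuous_finset_sum
  intro i _
  exact (continuous_id.sub continuous_const).norm

lemma F_nonneg (x : Fin 3 → (Fin 3 → ℝ)) (y : Fin 3 → ℝ) : 0 ≤ ∑ i, ‖y - x i‖ :=
  Finset.sum_nonneg fun i _ => norm_nonneg _

lemma F_ge_single (x : Fin 3 → (Fin 3 → ℝ)) (y : Fin 3 → ℝ) :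
    ‖y - x 0‖ ≤ ∑ i, ‖y - x i‖ := by
  rw [Fin.sum_univ_three]
  have h1 := norm_nonneg (y - x 1)
  have h2 := norm_nonneg (y - x 2)
  linarith

lemma exists_min (x : Fin 3 → (Fin 3 → ℝ)) :
    ∃ p : Fin 3 → ℝ, ∀ y, ∑ i, ‖p - x i‖ ≤ ∑ i, ‖y - x i‖ := by
  set F := fun y : Fin 3 → ℝ => ∑ i, ‖y - x i‖ with hF
  set R := ‖x 0‖ + F 0 + 1 with hR
  have hR0 : 0 ≤ R := by
    have := F_nonneg x 0
    have := norm_nonneg (x 0)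
    simp only [hR]
    linarith
  obtain ⟨p, hpmem, hpmin⟩ := (isCompact_closedBall (0 : Fin 3 → ℝ) R).exists_isMinOn
    ⟨0, Metric.mem_closedBall_self hR0⟩ ((F_cont x).continuousOn)
  refine ⟨p, fun y => ?_⟩
  by_cases hy : y ∈ Metric.closedBall (0 : Fin 3 → ℝ) R
  · exact isMinOn_iff.mp hpmin y hy
  · have hnorm : R < ‖y‖ := by
      simp only [Metric.mem_closedBall, not_le, dist_zero_right] at hy
      exact hy
    have h1 : F p ≤ F 0 := isMinOn_iff.mp hpmin 0 (Metric.mem_closedBall_self hR0)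
    have h2 : ‖y‖ - ‖x 0‖ ≤ ‖y - x 0‖ := norm_sub_norm_le y (x 0)
    have h3 := F_ge_single x y
    simp only [hR] at hnorm
    calc F p ≤ F 0 := h1
      _ ≤ ‖y - x 0‖ := by linarith
      _ ≤ F y := h3

lemma ft_closed (x : Fin 3 → (Fin 3 → ℝ)) : IsClosed (ft x) := by
  have hft : ft x = ⋂ (y : Fin 3 → ℝ), {p : Fin 3 → ℝ | ∑ i, ‖p - x i‖ ≤ ∑ i, ‖y - x i‖} := by
    ext z; simp [ft, Set.mem_iInter]
  rw [hft]
  exact isClosed_iInter fun y => isClosed_le (F_cont x) continuous_const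

lemma F_convex (x : Fin 3 → (Fin 3 → ℝ)) {α β : ℝ} (hα : 0 ≤ α) (hβ : 0 ≤ β)
    (hs : α + β = 1) (a b : Fin 3 → ℝ) :
    ∑ i, ‖(α • a + β • b) - x i‖ ≤ α * ∑ i, ‖a - x i‖ + β * ∑ i, ‖b - x i‖ := by
  have hkey : ∀ i : Fin 3, ‖(α • a + β • b) - x i‖ ≤ α * ‖a - x i‖ + β * ‖b - x i‖ := by
    intro i
    have hvec : (α • a + β • b) - x i = α • (a - x i) + β • (b - x i) := by
      funext k
      simp only [Pi.add_apply, Pi.sub_apply, Pi.smul_apply, smul_eq_mul]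
      have : α * x i k + β * x i k = x i k := by
        have := congrArg (fun z => z * x i k) hs
        simpa [add_mul] using this
      linarith [this]
    rw [hvec]
    exact norm_combo hα hβ _ _
  calc ∑ i, ‖(α • a + β • b) - x i‖ ≤ ∑ i, (α * ‖a - x i‖ + β * ‖b - x i‖) :=
        Finset.sum_le_sum fun i _ => hkey i
    _ = α * ∑ i, ‖a - x i‖ + β * ∑ i, ‖b - x i‖ := by
        rw [Finset.sum_add_distrib, Finset.mul_sum, Finset.mul_sum]

/-- In `ℝ³` with the supremum norm (unit ball a cube), for any three points, if the
Fermat–Torricelli set is not a single point then it is a (non-degenerate) closed segment. -/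
theorem cube_norm_ft_segment_of_nonunique
    (x₁ x₂ x₃ : Fin 3 → ℝ)
    (h : ¬ ∃ p : Fin 3 → ℝ, ft ![x₁, x₂, x₃] = {p}) :
    ∃ a b : Fin 3 → ℝ, a ≠ b ∧ ft ![x₁, x₂, x₃] = segment ℝ a b := by
  classical
  set x : Fin 3 → (Fin 3 → ℝ) := ![x₁, x₂, x₃] with hx
  set F : (Fin 3 → ℝ) → ℝ := fun y => ∑ i, ‖y - x i‖ with hF
  have hftmem : ∀ z : Fin 3 → ℝ, z ∈ ft x ↔ ∀ y, F z ≤ F y := fun z => Iff.rfl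
  obtain ⟨a, ha⟩ := exists_min x
  have haft : a ∈ ft x := ha
  have hne : ∃ b ∈ ft x, b ≠ a := by
    by_contra hc
    push_neg at hc
    exact h ⟨a, Set.eq_singleton_iff_unique_mem.mpr ⟨haft, fun z hz => hc z hz⟩⟩
  obtain ⟨b, hbft, hba⟩ := hne
  have hu0 : b - a ≠ 0 := sub_ne_zero.mpr hba
  have hline : ∀ c ∈ ft x, ∃ t : ℝ, c = a + t • (b - a) := by
    intro c hc
    obtain ⟨s, t, hst, heq⟩ := key_dep x ha hbft hc
    by_cases ht : t = 0
    · exfalso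
      subst ht
      rw [zero_smul, add_zero] at heq
      rcases smul_eq_zero.mp heq with hs | hbb
      · exact hst ⟨hs, rfl⟩
      · exact hu0 hbb
    · refine ⟨-s/t, ?_⟩
      have h3 : t • (c - a) = (-s) • (b - a) := by
        rw [neg_smul]
        exact eq_neg_of_add_eq_zero_right heq
      have h2 : c - a = (-s/t) • (b - a) := by
        calc c - a = (t⁻¹ * t) • (c - a) := by rw [inv_mul_cancel₀ ht, one_smul]
          _ = t⁻¹ • (t • (c - a)) := by rw [mul_smul]
          _ = t⁻¹ • ((-s) • (b - a)) := by rw [h3]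
          _ = (-s/t) • (b - a) := by rw [smul_smul]; congr 1; field_simp
      rw [← h2]
      abel
  set S := {t : ℝ | a + t • (b - a) ∈ ft x} with hS
  have h0S : (0:ℝ) ∈ S := by
    simp only [hS, Set.mem_setOf_eq, zero_smul, add_zero]
    exact haft
  have h1S : (1:ℝ) ∈ S := by
    simp only [hS, Set.mem_setOf_eq, one_smul]
    have : a + (b - a) = b := by abel
    rw [this]
    exact hbft
  have hSclosed : IsClosed S := by
    have : S = (fun t : ℝ => a + t • (b - a)) ⁻¹' (ft x) := rfl
    rw [this]
    exact (ft_closed x).preimage (continuous_const.add (continuous_id.smul continuous_const))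
  have hu_pos : 0 < ‖b - a‖ := norm_pos_iff.mpr hu0
  have hBdd : ∀ t ∈ S, |t| ≤ (F a + ‖a - x 0‖) / ‖b - a‖ := by
    intro t htS
    have hmem : a + t • (b - a) ∈ ft x := htS
    have hFeq : F (a + t • (b - a)) = F a := le_antisymm (hmem a) (ha _)
    have h4 : ‖(a + t • (b - a)) - x 0‖ ≤ F (a + t • (b - a)) := F_ge_single x _
    have h5 : ‖t • (b - a)‖ - ‖a - x 0‖ ≤ ‖(a + t • (b - a)) - x 0‖ := by
      have hv : t • (b - a) = ((a + t • (b - a)) - x 0) - (a - x 0) := by abel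
      calc ‖t • (b - a)‖ - ‖a - x 0‖
          = ‖((a + t • (b - a)) - x 0) - (a - x 0)‖ - ‖a - x 0‖ := by rw [← hv]
        _ ≤ (‖(a + t • (b - a)) - x 0‖ + ‖a - x 0‖) - ‖a - x 0‖ := by
            have := norm_sub_le ((a + t • (b - a)) - x 0) (a - x 0)
            linarith
        _ = ‖(a + t • (b - a)) - x 0‖ := by ring
    have h6 : ‖t • (b - a)‖ = |t| * ‖b - a‖ := by
      rw [norm_smul, Real.norm_eq_abs]
    rw [le_div_iff₀ hu_pos]
    have : |t| * ‖b - a‖ ≤ F a + ‖a - x 0‖ := by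
      rw [← h6]
      rw [hFeq] at h4
      linarith
    linarith
  have hbddA : BddAbove S := ⟨(F a + ‖a - x 0‖) / ‖b - a‖,
    fun t htS => le_trans (le_abs_self t) (hBdd t htS)⟩
  have hbddB : BddBelow S := ⟨-((F a + ‖a - x 0‖) / ‖b - a‖),
    fun t htS => by have := hBdd t htS; have := neg_abs_le t; linarith⟩
  have hSne : S.Nonempty := ⟨0, h0S⟩
  set tm := sInf S with htm
  set tp := sSup S with htp
  have htmS : tm ∈ S := hSclosed.csInf_mem hSne hbddB
  have htpS : tp ∈ S := hSclosed.csSup_mem hSne hbddA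
  have htm0 : tm ≤ 0 := csInf_le hbddB h0S
  have htp1 : (1:ℝ) ≤ tp := le_csSup hbddA h1S
  have htmp : tm < tp := lt_of_le_of_lt htm0 (lt_of_lt_of_le one_pos htp1)
  refine ⟨a + tm • (b - a), a + tp • (b - a), ?_, ?_⟩
  · intro he
    have h7 : (tm - tp) • (b - a) = 0 := by
      have := add_left_cancel he
      rw [sub_smul, this, sub_self]
    rcases smul_eq_zero.mp h7 with h8 | h8
    · have : tm = tp := by linarith [sub_eq_zero.mp h8]
      exact absurd this (ne_of_lt htmp)
    · exact hu0 h8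
  · ext z
    constructor
    · intro hz
      obtain ⟨t, hzt⟩ := hline z hz
      have htS : t ∈ S := by
        simp only [hS, Set.mem_setOf_eq, ← hzt]
        exact hz
      have htlb : tm ≤ t := csInf_le hbddB htS
      have htub : t ≤ tp := le_csSup hbddA htS
      set α := (tp - t) / (tp - tm) with hα
      set β := (t - tm) / (tp - tm) with hβ
      have hden : 0 < tp - tm := by linarith
      have hα0 : 0 ≤ α := div_nonneg (by linarith) hden.le
      have hβ0 : 0 ≤ β := div_nonneg (by linarith) hden.le
      have hαβ : α + β = 1 := by
        rw [hα, hβ, ← add_div, div_eq_one_iff_eq hden.ne']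
        ring
      have hcomb : α * tm + β * tp = t := by
        rw [hα, hβ]
        field_simp
        ring
      refine ⟨α, β, hα0, hβ0, hαβ, ?_⟩
      have hvec : α • (a + tm • (b - a)) + β • (a + tp • (b - a))
          = (α + β) • a + (α * tm + β * tp) • (b - a) := by
        funext k
        simp only [Pi.add_apply, Pi.smul_apply, Pi.sub_apply, smul_eq_mul]
        ring
      rw [hvec, hαβ, hcomb, one_smul, ← hzt]
    · rintro ⟨α, β, hα0, hβ0, hαβ, rfl⟩
      have hA : a + tm • (b - a) ∈ ft x := htmS
      have hB : a + tp • (b - a) ∈ ft x := htpS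
      intro y
      have hcv := F_convex x hα0 hβ0 hαβ (a + tm • (b - a)) (a + tp • (b - a))
      have hAy : F (a + tm • (b - a)) ≤ F y := hA y
      have hBy : F (a + tp • (b - a)) ≤ F y := hB y
      have h9 : α * F (a + tm • (b - a)) ≤ α * F y := mul_le_mul_of_nonneg_left hAy hα0
      have h10 : β * F (a + tp • (b - a)) ≤ β * F y := mul_le_mul_of_nonneg_left hBy hβ0
      have h11 : α * F y + β * F y = F y := by rw [← add_mul, hαβ, one_mul]
      calc (∑ i, ‖(α • (a + tm • (b - a)) + β • (a + tp • (b - a))) - x i‖)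
          ≤ α * F (a + tm • (b - a)) + β * F (a + tp • (b - a)) := hcv
        _ ≤ α * F y + β * F y := by linarith
        _ = F y := h11

end
end

section
/- In the space ℝ³ equipped with the ℓ¹ norm ‖(x,y,z)‖ = |x| + |y| + |z| (whose unit ball is a regular octahedron), for any three points x_1, x_2, x_3 the Fermat–Torricelli set ft(x_1, x_2, x_3) is a single point. -/
private lemma key_sorted (a b c t : ℝ) (h1 : a ≤ b) (h2 : b ≤ c) :
    |b - a| + |b - b| + |b - c| + |t - b| ≤ |t - a| + |t - b| + |t - c| := by
  have h4 : t - a ≤ |t - a| := le_abs_self _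
  have h5 : -(t - c) ≤ |t - c| := neg_le_abs _
  rw [abs_of_nonneg (by linarith : (0:ℝ) ≤ b - a), sub_self, abs_zero,
    abs_of_nonpos (by linarith : b - c ≤ 0)]
  linarith

private lemma exists_med (a b c : ℝ) : ∃ m : ℝ,
    ∀ t : ℝ, |m - a| + |m - b| + |m - c| + |t - m| ≤ |t - a| + |t - b| + |t - c| := by
  rcases le_total a b with hab | hab <;> rcases le_total b c with hbc | hbc <;>
    rcases le_total a c with hac | hac
  · exact ⟨b, fun t => by have := key_sorted a b c t hab hbc; linarith⟩
  · exact ⟨b, fun t => by have := key_sorted a b c t hab hbc; linarith⟩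
  · exact ⟨c, fun t => by have := key_sorted a c b t hac hbc; linarith⟩
  · exact ⟨a, fun t => by have := key_sorted c a b t hac hab; linarith⟩
  · exact ⟨a, fun t => by have := key_sorted b a c t hab hac; linarith⟩
  · exact ⟨c, fun t => by have := key_sorted b c a t hbc hac; linarith⟩
  · exact ⟨b, fun t => by have := key_sorted a b c t (hac.trans hbc) (hab.trans hac); linarith⟩
  · exact ⟨b, fun t => by have := key_sorted c b a t hbc hab; linarith⟩

private lemma l1_norm (v : PiLp 1 fun _ : Fin 3 => ℝ) : ‖v‖ = |v 0| + |v 1| + |v 2| := by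
  rw [PiLp.norm_eq_sum (by norm_num)]
  simp [Fin.sum_univ_three, Real.norm_eq_abs]

/-- In `ℝ³` with the `ℓ¹` norm (unit ball a regular octahedron), the Fermat–Torricelli
set of any three points is a single point. -/
theorem octahedron_norm_ft_unique
    (x₁ x₂ x₃ : PiLp 1 (fun _ : Fin 3 => ℝ)) :
    ∃ p : PiLp 1 (fun _ : Fin 3 => ℝ), ft ![x₁, x₂, x₃] = {p} := by
  obtain ⟨m0, hm0⟩ := exists_med (x₁ 0) (x₂ 0) (x₃ 0)
  obtain ⟨m1, hm1⟩ := exists_med (x₁ 1) (x₂ 1) (x₃ 1)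
  obtain ⟨m2, hm2⟩ := exists_med (x₁ 2) (x₂ 2) (x₃ 2)
  set p : PiLp 1 (fun _ : Fin 3 => ℝ) := (WithLp.equiv 1 _).symm ![m0, m1, m2] with hp
  have hp0 : p 0 = m0 := rfl
  have hp1 : p 1 = m1 := rfl
  have hp2 : p 2 = m2 := rfl
  have hkey : ∀ q : PiLp 1 (fun _ : Fin 3 => ℝ),
      (∑ i, ‖p - ![x₁, x₂, x₃] i‖) + ‖q - p‖ ≤ ∑ i, ‖q - ![x₁, x₂, x₃] i‖ := by
    intro q
    simp only [Fin.sum_univ_three, Matrix.cons_val_zero, Matrix.cons_val_one, Matrix.head_cons,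
      Matrix.cons_val_two, Matrix.tail_cons]
    rw [l1_norm, l1_norm, l1_norm, l1_norm, l1_norm, l1_norm, l1_norm]
    have e : ∀ (v w : PiLp 1 fun _ : Fin 3 => ℝ) (i : Fin 3), (v - w) i = v i - w i :=
      fun _ _ _ => rfl
    simp only [e, hp0, hp1, hp2]
    have := hm0 (q 0); have := hm1 (q 1); have := hm2 (q 2)
    linarith
  refine ⟨p, ?_⟩
  ext q
  simp only [ft, Set.mem_setOf_eq, Set.mem_singleton_iff]
  constructor
  · intro hq
    have h1 := hq p
    have h2 := hkey q
    have h3 : ‖q - p‖ ≤ 0 := by linarith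
    have h4 : ‖q - p‖ = 0 := le_antisymm h3 (norm_nonneg _)
    exact sub_eq_zero.mp (norm_eq_zero.mp h4)
  · rintro rfl
    intro r
    have := hkey r
    have := norm_nonneg (r - p)
    linarith
end

section
/- Let Y be a real normed vector space of dimension 2 and let X = Y × ℝ be equipped with the norm ‖(y,t)‖ = max(‖y‖, |t|) (so that the unit ball of X is a prism/cylinder over the unit ball of Y). Then for every integer n ≥ 2 there exist n pairwise distinct points x_1,…,x_n in X such that the Fermat–Torricelli set ft(x_1,…,x_n) contains at least two distinct points. -/
open Finset

section Auxiliary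

variable {Y : Type*} [NormedAddCommGroup Y] [NormedSpace ℝ Y]

/-- In a finite-dimensional space, a norm-one functional attains its norm. -/
lemma my_attain [FiniteDimensional ℝ Y] (hY : ∃ v : Y, ‖v‖ = 1)
    (g : Y →L[ℝ] ℝ) (hg : ‖g‖ = 1) : ∃ v : Y, ‖v‖ = 1 ∧ g v = 1 := by
  obtain ⟨v0, hv0⟩ := hY
  have hcomp : IsCompact (Metric.sphere (0 : Y) 1) := isCompact_sphere 0 1
  have hne : (Metric.sphere (0 : Y) 1).Nonempty := ⟨v0, by simp [hv0]⟩
  obtain ⟨v, hvmem, hvmax⟩ := hcomp.exists_isMaxOn hne g.continuous.continuousOn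
  have hv1 : ‖v‖ = 1 := by simpa using hvmem
  have hub : ∀ w : Y, ‖w‖ = 1 → g w ≤ g v := by
    intro w hw
    exact hvmax (by simp [hw])
  have habs : ∀ w : Y, |g w| ≤ g v * ‖w‖ := by
    intro w
    rcases eq_or_ne w 0 with rfl | hw
    · simp
    · have hnw : ‖w‖ ≠ 0 := norm_ne_zero_iff.mpr hw
      have h1 : ‖(‖w‖⁻¹ • w)‖ = 1 := by
        rw [norm_smul]
        simp [abs_of_nonneg (inv_nonneg.mpr (norm_nonneg w)), inv_mul_cancel₀ hnw]
      have h2 := hub _ h1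
      have h3 : ‖(-(‖w‖⁻¹ • w))‖ = 1 := by rwa [norm_neg]
      have h4 := hub _ h3
      rw [map_neg] at h4
      rw [map_smul] at h2 h4
      simp only [smul_eq_mul] at h2 h4
      have h5 : |(‖w‖⁻¹ : ℝ) * g w| ≤ g v := abs_le.mpr ⟨by linarith [h4], by
        simpa using h2⟩
      rw [abs_mul, abs_of_nonneg (inv_nonneg.mpr (norm_nonneg w))] at h5
      calc |g w| = ‖w‖ * (‖w‖⁻¹ * |g w|) := by field_simp
        _ ≤ ‖w‖ * g v := by
            apply mul_le_mul_of_nonneg_left h5 (norm_nonneg w)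
        _ = g v * ‖w‖ := mul_comm _ _
  have hle : ‖g‖ ≤ g v := by
    apply g.opNorm_le_bound
    · rcases le_or_gt 0 (g v) with h | h
      · exact h
      · exfalso
        have := habs v
        rw [hv1, mul_one] at this
        have := le_trans (abs_nonneg _) this
        linarith
    · intro x
      simpa using habs x
  have hge : g v ≤ ‖g‖ := by
    calc g v ≤ |g v| := le_abs_self _
      _ ≤ ‖g‖ * ‖v‖ := g.le_opNorm v
      _ = ‖g‖ := by rw [hv1, mul_one]
  exact ⟨v, hv1, le_antisymm (by rw [← hg]; exact hge) (by rw [← hg]; exact hle)⟩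

set_option maxHeartbeats 1000000 in
set_option synthInstance.maxHeartbeats 400000 in
/-- In a two-dimensional normed space there are three norm-one functionals summing to zero,
each attaining its norm at a unit vector. -/
lemma my_triple (hd : Module.finrank ℝ Y = 2) :
    ∃ (φ ψ χ : Y →L[ℝ] ℝ) (u₁ u₂ u₃ : Y),
      ‖φ‖ = 1 ∧ ‖ψ‖ = 1 ∧ ‖χ‖ = 1 ∧ φ + ψ + χ = 0 ∧
      ‖u₁‖ = 1 ∧ ‖u₂‖ = 1 ∧ ‖u₃‖ = 1 ∧
      φ u₁ = 1 ∧ ψ u₂ = 1 ∧ χ u₃ = 1 := by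
  haveI : FiniteDimensional ℝ Y := FiniteDimensional.of_finrank_pos (by omega)
  -- a basis
  let b := Module.finBasisOfFinrankEq ℝ Y hd
  have hb0 : b 0 ≠ 0 := b.ne_zero 0
  -- a unit vector and its norming functional
  set u : Y := ‖b 0‖⁻¹ • b 0 with hu_def
  have hnb0 : ‖b 0‖ ≠ 0 := norm_ne_zero_iff.mpr hb0
  have hu : ‖u‖ = 1 := by
    rw [hu_def, norm_smul, norm_inv, norm_norm, inv_mul_cancel₀ hnb0]
  have hune : u ≠ 0 := by
    intro h; rw [h] at hu; simp at hu
  obtain ⟨φ, hφ1, hφu'⟩ := exists_dual_vector ℝ u (norm_ne_zero_iff.mpr hune)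
  have hφu : φ u = 1 := by simpa [hu] using hφu'
  -- vector in the kernel of φ
  set w : Y := (φ (b 1)) • b 0 - (φ (b 0)) • b 1 with hw_def
  have hφw : φ w = 0 := by
    rw [hw_def, map_sub, map_smul, map_smul]
    simp [smul_eq_mul, mul_comm]
  have hwne : w ≠ 0 := by
    intro h
    have hli := b.linearIndependent
    rw [hw_def, sub_eq_zero] at h
    by_cases h0 : φ (b 0) = 0
    · by_cases h1 : φ (b 1) = 0
      · -- φ vanishes on the basis, hence φ = 0, contradicting φ u = 1
        have : φ u = 0 := by
          have : ∀ x : Y, φ x = 0 := by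
            intro x
            have := b.sum_repr x
            rw [← this, map_sum]
            apply Finset.sum_eq_zero
            intro i _
            fin_cases i <;> simp [h0, h1]
          exact this u
        rw [hφu] at this; norm_num at this
      · -- then φ (b 1) • b 0 = 0 with φ (b 1) ≠ 0 → b 0 = 0
        rw [h0, zero_smul] at h
        rw [smul_eq_zero] at h
        rcases h with h | h
        · exact h1 h
        · exact hb0 h
    · -- b 1 = c • b 0 contradicts linear independence
      have h1 : b 1 = (φ (b 0))⁻¹ • (φ (b 1) • b 0) := by
        rw [h, smul_smul, inv_mul_cancel₀ h0, one_smul]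
      have h2 : (b.repr (b 1)) 1 = (b.repr ((φ (b 0))⁻¹ • (φ (b 1) • b 0))) 1 := by
        rw [← h1]
      simp [Module.Basis.repr_self, Finsupp.single_apply] at h2
  -- norming functional for w
  obtain ⟨ρ, hρ1, hρw⟩ := exists_dual_vector ℝ w (norm_ne_zero_iff.mpr hwne)
  have hρwpos : 0 < ρ w := by rw [hρw]; exact norm_pos_iff.mpr hwne
  -- the path of functionals
  set η : ℝ → (Y →L[ℝ] ℝ) := fun s => (1 - 2*s) • φ + (s * (1-s)) • ρ with hη_def
  have hη0 : η 0 = φ := by simp [hη_def]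
  have hη1 : η 1 = -φ := by
    ext x
    simp only [hη_def, ContinuousLinearMap.add_apply, ContinuousLinearMap.coe_smul',
      Pi.smul_apply, smul_eq_mul, ContinuousLinearMap.neg_apply]
    ring
  have hφne : φ ≠ 0 := by
    intro h; rw [h] at hφu; simp at hφu
  have hηne : ∀ s ∈ Set.Icc (0:ℝ) 1, ‖η s‖ ≠ 0 := by
    intro s hs
    rw [norm_ne_zero_iff]
    intro h
    rcases eq_or_lt_of_le hs.1 with h0 | h0
    · rw [← h0, hη0] at h; exact hφne h
    rcases eq_or_lt_of_le hs.2 with h1 | h1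
    · rw [h1, hη1] at h; exact hφne (neg_eq_zero.mp h)
    have := congrArg (fun g : Y →L[ℝ] ℝ => g w) h
    simp only [hη_def, ContinuousLinearMap.add_apply, ContinuousLinearMap.coe_smul',
      Pi.smul_apply, smul_eq_mul, ContinuousLinearMap.zero_apply] at this
    rw [hφw, mul_zero, zero_add] at this
    have hs01 : 0 < s * (1 - s) := mul_pos h0 (by linarith)
    nlinarith
  -- the function for IVT
  set F : ℝ → ℝ := fun s => ‖φ + ‖η s‖⁻¹ • η s‖ with hF_def
  have hF0 : F 0 = 2 := by
    have e : F 0 = ‖φ + ‖η 0‖⁻¹ • η 0‖ := rfl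
    rw [hη0] at e
    rw [e, hφ1, inv_one, one_smul, ← two_smul ℝ φ, norm_smul, hφ1]
    norm_num
  have hF1 : F 1 = 0 := by
    have e : F 1 = ‖φ + ‖η 1‖⁻¹ • η 1‖ := rfl
    rw [hη1] at e
    rw [e, norm_neg, hφ1, inv_one, one_smul]
    simp
  have hFcont : ContinuousOn F (Set.Icc 0 1) := by
    have hηcont : Continuous η := by
      apply Continuous.add
      · exact (continuous_const.sub (continuous_const.mul continuous_id)).smul continuous_const
      · exact (continuous_id.mul (continuous_const.sub continuous_id)).smul continuous_const
    apply ContinuousOn.norm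
    apply ContinuousOn.add continuousOn_const
    exact ContinuousOn.smul ((hηcont.norm.continuousOn).inv₀ hηne) hηcont.continuousOn
  have hIVT : (1:ℝ) ∈ F '' Set.Icc 0 1 := by
    have := intermediate_value_Icc' (by norm_num : (0:ℝ) ≤ 1) hFcont
    apply this
    rw [hF0, hF1]
    norm_num
  obtain ⟨s₀, hs₀mem, hs₀⟩ := hIVT
  set ψ : Y →L[ℝ] ℝ := ‖η s₀‖⁻¹ • η s₀ with hψ_def
  have hψ1 : ‖ψ‖ = 1 := by
    have e := norm_smul (β := Y →L[ℝ] ℝ) (‖η s₀‖⁻¹) (η s₀)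
    rw [hψ_def, e, norm_inv, norm_norm, inv_mul_cancel₀ (hηne s₀ hs₀mem)]
  set χ : Y →L[ℝ] ℝ := -(φ + ψ) with hχ_def
  have hχ1 : ‖χ‖ = 1 := by rw [hχ_def, norm_neg]; exact hs₀
  have hsum : φ + ψ + χ = 0 := by rw [hχ_def]; module
  obtain ⟨u₂, hu₂, hψu₂⟩ := my_attain ⟨u, hu⟩ ψ hψ1
  obtain ⟨u₃, hu₃, hχu₃⟩ := my_attain ⟨u, hu⟩ χ hχ1
  exact ⟨φ, ψ, χ, u, u₂, u₃, hφ1, hψ1, hχ1, hsum, hu, hu₂, hu₃, hφu, hψu₂, hχu₃⟩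

/-- Key lemma: given unit-norm-bounded functionals summing to zero, each norming the
corresponding point, the vertical segment over 0 lies in the Fermat–Torricelli set. -/
lemma my_main {n : ℕ} (y : Fin n → Y) (φ : Fin n → Y →L[ℝ] ℝ)
    (h1 : ∀ i, ‖φ i‖ ≤ 1) (h2 : ∑ i, φ i = 0)
    (h3 : ∀ i, φ i (y i) = ‖y i‖) (h4 : ∀ i, 1 ≤ ‖y i‖)
    (h5 : Function.Injective y) :
    ∃ x : Fin n → Y × ℝ, Function.Injective x ∧
      ∃ a ∈ ft x, ∃ b ∈ ft x, a ≠ b := by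
  set x : Fin n → Y × ℝ := fun i => (y i, 0) with hx_def
  have key : ∀ q : Y × ℝ, ∑ i, ‖y i‖ ≤ ∑ i, ‖q - x i‖ := by
    intro q
    have step : ∀ i : Fin n, ‖y i‖ - φ i q.1 ≤ ‖q - x i‖ := by
      intro i
      have e1 : ‖y i‖ - φ i q.1 = φ i (y i - q.1) := by
        rw [map_sub, h3]
      have e2 : φ i (y i - q.1) ≤ ‖y i - q.1‖ := by
        calc φ i (y i - q.1) ≤ |φ i (y i - q.1)| := le_abs_self _
          _ ≤ ‖φ i‖ * ‖y i - q.1‖ := (φ i).le_opNorm _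
          _ ≤ 1 * ‖y i - q.1‖ :=
              mul_le_mul_of_nonneg_right (h1 i) (norm_nonneg _)
          _ = ‖y i - q.1‖ := one_mul _
      have e3 : ‖y i - q.1‖ ≤ ‖q - x i‖ := by
        rw [norm_sub_rev]
        have e4 : (q - x i).1 = q.1 - y i := rfl
        calc ‖q.1 - y i‖ = ‖(q - x i).1‖ := by rw [e4]
          _ ≤ max ‖(q - x i).1‖ ‖(q - x i).2‖ := le_max_left _ _
          _ = ‖q - x i‖ := (Prod.norm_def _).symm
      linarith [e1 ▸ e2.trans e3]
    have esum : ∑ i, (‖y i‖ - φ i q.1) = ∑ i, ‖y i‖ := by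
      rw [Finset.sum_sub_distrib]
      have : ∑ i, φ i q.1 = (∑ i, φ i) q.1 := by
        rw [ContinuousLinearMap.sum_apply]
      rw [this, h2]
      simp
    calc ∑ i, ‖y i‖ = ∑ i, (‖y i‖ - φ i q.1) := esum.symm
      _ ≤ ∑ i, ‖q - x i‖ := Finset.sum_le_sum (fun i _ => step i)
  have val_a : ∀ t : ℝ, |t| ≤ 1 → ∑ i, ‖((0 : Y), t) - x i‖ = ∑ i, ‖y i‖ := by
    intro t ht
    apply Finset.sum_congr rfl
    intro i _
    have : ((0 : Y), t) - x i = (-(y i), t) := by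
      simp [hx_def, Prod.ext_iff]
    rw [this, Prod.norm_def]
    simp only [norm_neg]
    have : ‖t‖ ≤ ‖y i‖ := by
      rw [Real.norm_eq_abs]; exact ht.trans (h4 i)
    exact max_eq_left this
  refine ⟨x, ?_, ((0 : Y), (0 : ℝ)), ?_, ((0 : Y), (1 : ℝ)), ?_, ?_⟩
  · intro i j hij
    apply h5
    have := congrArg Prod.fst hij
    simpa [hx_def] using this
  · intro q
    rw [val_a 0 (by norm_num)]
    exact key q
  · intro q
    rw [val_a 1 (by norm_num)]
    exact key q
  · simp [Prod.ext_iff]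

end Auxiliary

set_option maxHeartbeats 2000000 in
set_option synthInstance.maxHeartbeats 1000000 in
/-- If the unit ball of a three-dimensional normed space is a prism, i.e. the space is
`Y × ℝ` with the sup norm where `Y` is a normed plane, then for every `n ≥ 2` there exist
`n` pairwise distinct points whose Fermat–Torricelli set contains at least two points. -/
theorem prism_norm_exists_nonunique_ft
    {Y : Type*} [NormedAddCommGroup Y] [NormedSpace ℝ Y]
    (hd : Module.finrank ℝ Y = 2)
    {n : ℕ} (hn : 2 ≤ n) :
    ∃ x : Fin n → Y × ℝ, Function.Injective x ∧
      ∃ a ∈ ft x, ∃ b ∈ ft x, a ≠ b := by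
  obtain ⟨φ, ψ, χ, u₁, u₂, u₃, hφ1, hψ1, hχ1, hsum, hu₁, hu₂, hu₃, hφu, hψu, hχu⟩ :=
    my_triple hd
  -- distinctness of the norming vectors
  have pair_bound : ∀ (f g : Y →L[ℝ] ℝ) (v : Y), ‖f + g‖ = 1 → ‖v‖ = 1 →
      f v = 1 → g v = 1 → False := by
    intro f g v hfg hv hf hg
    have : (f + g) v ≤ |(f + g) v| := le_abs_self _
    have h2 : |(f + g) v| ≤ ‖f + g‖ * ‖v‖ := (f + g).le_opNorm v
    rw [hfg, hv, one_mul] at h2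
    simp only [ContinuousLinearMap.add_apply, hf, hg] at this h2
    linarith
  have hχ' : ‖φ + ψ‖ = 1 := by
    have e : φ + ψ = -χ := eq_neg_of_add_eq_zero_left hsum
    rw [e, norm_neg, hχ1]
  have hψ' : ‖φ + χ‖ = 1 := by
    have e : φ + χ = -ψ := eq_neg_of_add_eq_zero_left (by rw [← hsum]; abel)
    rw [e, norm_neg, hψ1]
  have hφ' : ‖ψ + χ‖ = 1 := by
    have e : ψ + χ = -φ := eq_neg_of_add_eq_zero_left (by rw [← hsum]; abel)
    rw [e, norm_neg, hφ1]
  have h12 : u₁ ≠ u₂ := by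
    intro h
    exact pair_bound φ ψ u₂ hχ' hu₂ (h ▸ hφu) hψu
  have h13 : u₁ ≠ u₃ := by
    intro h
    exact pair_bound φ χ u₃ hψ' hu₃ (h ▸ hφu) hχu
  have h23 : u₂ ≠ u₃ := by
    intro h
    exact pair_bound ψ χ u₃ hφ' hu₃ (h ▸ hψu) hχu
  rcases Nat.even_or_odd n with hpar | hpar
  · -- even case
    set y : Fin n → Y := fun i => ((-1 : ℝ) ^ (i : ℕ) * ((i : ℕ) + 1)) • u₁ with hy_def
    set Φ : Fin n → Y →L[ℝ] ℝ := fun i => ((-1 : ℝ) ^ (i : ℕ)) • φ with hΦ_def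
    have hnorm : ∀ i : Fin n, ‖y i‖ = (i : ℕ) + 1 := by
      intro i
      have e := norm_smul (β := Y) ((-1 : ℝ) ^ (i : ℕ) * ((i : ℕ) + 1)) u₁
      rw [hy_def]
      simp only []
      rw [e, hu₁, mul_one, Real.norm_eq_abs, abs_mul, abs_pow, abs_neg, abs_one, one_pow,
        one_mul, abs_of_nonneg (by positivity : (0:ℝ) ≤ (i : ℕ) + 1)]
    apply my_main y Φ
    · intro i
      have e := norm_smul (β := Y →L[ℝ] ℝ) ((-1 : ℝ) ^ (i : ℕ)) φ
      rw [hΦ_def]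
      simp only []
      rw [e, hφ1, mul_one, Real.norm_eq_abs, abs_pow, abs_neg, abs_one, one_pow]
    · rw [hΦ_def, ← Finset.sum_smul]
      have : ∑ i : Fin n, (-1 : ℝ) ^ (i : ℕ) = ∑ i ∈ Finset.range n, (-1 : ℝ) ^ i :=
        Fin.sum_univ_eq_sum_range _ n
      rw [this, neg_one_geom_sum, if_pos hpar, zero_smul]
    · intro i
      rw [hnorm i, hy_def, hΦ_def]
      simp only [ContinuousLinearMap.smul_apply, map_smul, smul_eq_mul, hφu, mul_one]
      have hsq : (-1 : ℝ) ^ (i : ℕ) * (-1 : ℝ) ^ (i : ℕ) = 1 := by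
        rw [← pow_add]
        exact Even.neg_one_pow ⟨(i : ℕ), rfl⟩
      linear_combination (((i : ℕ) : ℝ) + 1) * hsq
    · intro i
      rw [hnorm i]
      have : (0:ℝ) ≤ (i : ℕ) := Nat.cast_nonneg _
      linarith
    · intro i j hij
      have := congrArg norm hij
      rw [hnorm i, hnorm j] at this
      have h' : ((i : ℕ) : ℝ) = ((j : ℕ) : ℝ) := by linarith
      have : (i : ℕ) = (j : ℕ) := by exact_mod_cast h'
      exact Fin.ext this
  · -- odd case
    have hn3 : 3 ≤ n := by
      obtain ⟨k, hk⟩ := hpar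
      omega
    set y : Fin n → Y := fun i =>
      if (i : ℕ) = 0 then u₁ else if (i : ℕ) = 1 then u₂ else if (i : ℕ) = 2 then u₃
      else ((-1 : ℝ) ^ (i : ℕ) * (i : ℕ)) • u₁ with hy_def
    set Φ : Fin n → Y →L[ℝ] ℝ := fun i =>
      if (i : ℕ) = 0 then φ else if (i : ℕ) = 1 then ψ else if (i : ℕ) = 2 then χ
      else ((-1 : ℝ) ^ (i : ℕ)) • φ with hΦ_def
    have hnorm : ∀ i : Fin n, ‖y i‖ = if (i : ℕ) < 3 then 1 else ((i : ℕ) : ℝ) := by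
      intro i
      rw [hy_def]
      by_cases h0 : (i : ℕ) = 0
      · simp [h0, hu₁]
      by_cases h1 : (i : ℕ) = 1
      · simp [h0, h1, hu₂]
      by_cases h2 : (i : ℕ) = 2
      · simp [h0, h1, h2, hu₃]
      have h3 : ¬ ((i : ℕ) < 3) := by omega
      have e := norm_smul (β := Y) ((-1 : ℝ) ^ (i : ℕ) * ((i : ℕ) : ℝ)) u₁
      simp only [h0, h1, h2, if_false, if_neg h3]
      rw [e, hu₁, mul_one, Real.norm_eq_abs, abs_mul, abs_pow, abs_neg, abs_one, one_pow,
        one_mul, abs_of_nonneg (Nat.cast_nonneg _)]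
    apply my_main y Φ
    · intro i
      rw [hΦ_def]
      by_cases h0 : (i : ℕ) = 0
      · simp [h0, hφ1]
      by_cases h1 : (i : ℕ) = 1
      · simp [h0, h1, hψ1]
      by_cases h2 : (i : ℕ) = 2
      · simp [h0, h1, h2, hχ1]
      have e := norm_smul (β := Y →L[ℝ] ℝ) ((-1 : ℝ) ^ (i : ℕ)) φ
      simp only [h0, h1, h2, if_false]
      rw [e, hφ1, mul_one, Real.norm_eq_abs, abs_pow, abs_neg, abs_one, one_pow]
    · -- the sum of functionals vanishes
      set g : ℕ → Y →L[ℝ] ℝ := fun k =>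
        if k = 0 then φ else if k = 1 then ψ else if k = 2 then χ
        else ((-1 : ℝ) ^ k) • φ with hg_def
      have e0 : ∑ i : Fin n, Φ i = ∑ i : Fin n, g (i : ℕ) := rfl
      rw [e0, Fin.sum_univ_eq_sum_range g n]
      have hsplit : ∑ k ∈ Finset.range 3, g k + ∑ k ∈ Finset.Ico 3 n, g k
          = ∑ k ∈ Finset.range n, g k := by
        rw [Finset.range_eq_Ico, Finset.range_eq_Ico]
        exact Finset.sum_Ico_consecutive g (Nat.zero_le 3) hn3
      rw [← hsplit]
      have e1 : ∑ k ∈ Finset.range 3, g k = 0 := by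
        rw [Finset.sum_range_succ, Finset.sum_range_succ, Finset.sum_range_one]
        simp only [hg_def]
        norm_num
        rw [← hsum]
      have e2 : ∑ k ∈ Finset.Ico 3 n, g k = 0 := by
        have : ∑ k ∈ Finset.Ico 3 n, g k = ∑ k ∈ Finset.Ico 3 n, ((-1 : ℝ) ^ k) • φ := by
          apply Finset.sum_congr rfl
          intro k hk
          rw [Finset.mem_Ico] at hk
          rw [hg_def]
          simp only []
          rw [if_neg (by omega), if_neg (by omega), if_neg (by omega)]
        rw [this, ← Finset.sum_smul]
        have : ∑ k ∈ Finset.Ico 3 n, (-1 : ℝ) ^ k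
            = ∑ k ∈ Finset.range n, (-1 : ℝ) ^ k - ∑ k ∈ Finset.range 3, (-1 : ℝ) ^ k := by
          exact Finset.sum_Ico_eq_sub _ hn3
        rw [this, neg_one_geom_sum, neg_one_geom_sum]
        rw [if_neg (Nat.not_even_iff_odd.mpr hpar), if_neg (by decide)]
        norm_num
      rw [e1, e2, add_zero]
    · intro i
      rw [hnorm i, hy_def, hΦ_def]
      by_cases h0 : (i : ℕ) = 0
      · simp [h0, hφu]
      by_cases h1 : (i : ℕ) = 1
      · simp [h0, h1, hψu]
      by_cases h2 : (i : ℕ) = 2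
      · simp [h0, h1, h2, hχu]
      have h3 : ¬ ((i : ℕ) < 3) := by omega
      simp only [h0, h1, h2, if_false, if_neg h3, ContinuousLinearMap.smul_apply,
        map_smul, smul_eq_mul, hφu, mul_one]
      have hsq : (-1 : ℝ) ^ (i : ℕ) * (-1 : ℝ) ^ (i : ℕ) = 1 := by
        rw [← pow_add]
        exact Even.neg_one_pow ⟨(i : ℕ), rfl⟩
      linear_combination ((i : ℕ) : ℝ) * hsq
    · intro i
      rw [hnorm i]
      by_cases h3 : (i : ℕ) < 3
      · rw [if_pos h3]
      · rw [if_neg h3]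
        have : (3 : ℝ) ≤ (i : ℕ) := by exact_mod_cast Nat.le_of_not_lt h3
        linarith
    · intro i j hij
      have hnij := congrArg norm hij
      rw [hnorm i, hnorm j] at hnij
      by_cases hi3 : (i : ℕ) < 3 <;> by_cases hj3 : (j : ℕ) < 3
      · -- both small: case analysis
        have hi : (i : ℕ) = 0 ∨ (i : ℕ) = 1 ∨ (i : ℕ) = 2 := by omega
        have hj : (j : ℕ) = 0 ∨ (j : ℕ) = 1 ∨ (j : ℕ) = 2 := by omega
        rw [hy_def] at hij
        simp only [] at hij
        rcases hi with hi | hi | hi <;> rcases hj with hj | hj | hj <;>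
          rw [hi, hj] at hij <;> norm_num at hij <;>
          first
            | (exact Fin.ext (by omega))
            | (exact absurd hij h12)
            | (exact absurd hij h13)
            | (exact absurd hij h23)
            | (exact absurd hij.symm h12)
            | (exact absurd hij.symm h13)
            | (exact absurd hij.symm h23)
      · rw [if_pos hi3, if_neg hj3] at hnij
        have : (3 : ℝ) ≤ (j : ℕ) := by exact_mod_cast Nat.le_of_not_lt hj3
        linarith
      · rw [if_neg hi3, if_pos hj3] at hnij
        have : (3 : ℝ) ≤ (i : ℕ) := by exact_mod_cast Nat.le_of_not_lt hi3
        linarith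
      · rw [if_neg hi3, if_neg hj3] at hnij
        have : (i : ℕ) = (j : ℕ) := by exact_mod_cast hnij
        exact Fin.ext this
end
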